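/- Suppose φ^α : S(n-2) → U(m_α) is a unitary representation whose matrices at every transposition are hermitian (φ^α(ij)⁺ = φ^α(ij)). Consider the block matrix Q(α) ∈ M((n-1)m_α, ℂ) with blocks Q^{ab} = d·I if a=b, Q^{ab} = I if exactly one of a,b equals n-1, and Q^{ab} = φ^α((ab)) if a≠b and a,b ≤ n-2. Then for every block vector x = (x_1,...,x_{n-1}) with x_i ∈ ℂ^{m_α}, one has x⁺ Q(α) x ≥ (d - n + 2) Σ_{i=1}^{n-1} ‖x_i‖². Consequently, if d > n-2 then Q(α) is positive definite and invertible. -/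

import Mathlib

open Matrix ComplexOrder

private lemma star_mul_self_re (z : ℂ) : (star z * z).re = ‖z‖ ^ 2 := by
  rw [Complex.star_def, ← Complex.normSq_eq_conj_mul_self, Complex.ofReal_re, Complex.sq_norm]

private lemma key_unitary_bound {m : ℕ} (U : Matrix (Fin m) (Fin m) ℂ) (hU : Uᴴ * U = 1)
    (u v : Fin m → ℂ) :
    -(((star u ⬝ᵥ u).re + (star v ⬝ᵥ v).re) / 2) ≤ (star u ⬝ᵥ U.mulVec v).re := by
  set w := U.mulVec v with hw
  have hww : star w ⬝ᵥ w = star v ⬝ᵥ v := by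
    rw [hw, star_mulVec, dotProduct_mulVec, vecMul_vecMul, hU, vecMul_one]
  have hwu : (star w ⬝ᵥ u).re = (star u ⬝ᵥ w).re := by
    have : star w ⬝ᵥ u = star (star u ⬝ᵥ w) := by
      simp [dotProduct, star_sum, mul_comm]
    rw [this, Complex.star_def, Complex.conj_re]
  have h0 : 0 ≤ (star (u + w) ⬝ᵥ (u + w)).re := by
    simp only [dotProduct, Complex.re_sum]
    refine Finset.sum_nonneg fun i _ => ?_
    rw [Pi.star_apply, star_mul_self_re]
    positivity
  have hexp : (star (u + w) ⬝ᵥ (u + w))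
      = star u ⬝ᵥ u + star u ⬝ᵥ w + (star w ⬝ᵥ u + star w ⬝ᵥ w) := by
    simp [star_add, add_dotProduct, dotProduct_add]; ring
  rw [hexp] at h0
  simp only [Complex.add_re, hww, hwu] at h0
  linarith

/-- auxiliary: the off-diagonal block. -/
private def Uaux (t m : ℕ) (φ : Equiv.Perm (Fin t) →* Matrix (Fin m) (Fin m) ℂ)
    (a b : Fin (t + 1)) : Matrix (Fin m) (Fin m) ℂ :=
  if h : a = Fin.last t ∨ b = Fin.last t then 1
  else φ (Equiv.swap (a.castPred (fun hh => h (Or.inl hh)))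
      (b.castPred (fun hh => h (Or.inr hh))))

private lemma Uaux_unitary {t m : ℕ} (φ : Equiv.Perm (Fin t) →* Matrix (Fin m) (Fin m) ℂ)
    (hunit : ∀ σ, (φ σ)ᴴ * φ σ = 1) (a b : Fin (t + 1)) :
    (Uaux t m φ a b)ᴴ * Uaux t m φ a b = 1 := by
  unfold Uaux
  split
  · simp
  · exact hunit _

private lemma Uaux_symm {t m : ℕ} (φ : Equiv.Perm (Fin t) →* Matrix (Fin m) (Fin m) ℂ)
    (hherm : ∀ i j : Fin t, (φ (Equiv.swap i j))ᴴ = φ (Equiv.swap i j)) (a b : Fin (t + 1)) :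
    (Uaux t m φ b a)ᴴ = Uaux t m φ a b := by
  unfold Uaux
  by_cases h : b = Fin.last t ∨ a = Fin.last t
  · rw [dif_pos h, dif_pos h.symm, conjTranspose_one]
  · rw [dif_neg h, dif_neg (fun hc => h hc.symm)]
    rw [hherm, Equiv.swap_comm]

/-- Write t = n - 2 (so n - 1 = t + 1 blocks and d > n - 2 reads
d > t). Let φ : S(t) → U(m) be a unitary matrix representation whose matrices
at transpositions are hermitian. The block matrix Q with blocks
Q^{aa} = d·I, Q^{ab} = I if a ≠ b and a or b is the last index "n-1",
and Q^{ab} = φ((ab)) otherwise, satisfies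
x⁺ Q x ≥ (d - n + 2) Σ_a ‖x_a‖² for every block vector x; consequently if
d > n - 2 then Q is positive definite and invertible. -/
theorem stmt_9 (t m : ℕ) (d : ℝ) (hd : 0 < d)
    (φ : Equiv.Perm (Fin t) →* Matrix (Fin m) (Fin m) ℂ)
    (hunit : ∀ σ, (φ σ)ᴴ * φ σ = 1)
    (hherm : ∀ i j : Fin t, (φ (Equiv.swap i j))ᴴ = φ (Equiv.swap i j)) :
    let Q : Matrix (Fin (t + 1) × Fin m) (Fin (t + 1) × Fin m) ℂ :=
      Matrix.of fun p q =>
        if p.1 = q.1 then (d : ℂ) * (if p.2 = q.2 then 1 else 0)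
        else if h : p.1 = Fin.last t ∨ q.1 = Fin.last t then
          (if p.2 = q.2 then 1 else 0)
        else
          φ (Equiv.swap (p.1.castPred (fun hh => h (Or.inl hh)))
              (q.1.castPred (fun hh => h (Or.inr hh)))) p.2 q.2
    (∀ x : Fin (t + 1) × Fin m → ℂ,
      (d - t) * (∑ v, ‖x v‖ ^ 2) ≤ (star x ⬝ᵥ Q.mulVec x).re) ∧
    ((t : ℝ) < d → Q.PosDef ∧ IsUnit Q) := by
  intro Q
  have hQ : ∀ (a b : Fin (t + 1)) (i j : Fin m),
      Q (a, i) (b, j) = if a = b then ((d : ℂ) * if i = j then 1 else 0)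
        else Uaux t m φ a b i j := by
    intro a b i j
    by_cases hab : a = b
    · simp [Q, hab]
    · simp only [Q, Matrix.of_apply, if_neg hab, Uaux]
      split
      · simp [Matrix.one_apply]
      · rfl
  -- main inequality
  have hineq : ∀ x : Fin (t + 1) × Fin m → ℂ,
      (d - t) * (∑ v, ‖x v‖ ^ 2) ≤ (star x ⬝ᵥ Q.mulVec x).re := by
    intro x
    set xa : Fin (t + 1) → Fin m → ℂ := fun a i => x (a, i) with hxa
    set N : Fin (t + 1) → ℝ := fun a => (star (xa a) ⬝ᵥ xa a).re with hNdef
    have hN : ∀ a, N a = ∑ i, ‖x (a, i)‖ ^ 2 := by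
      intro a
      simp only [hNdef, dotProduct, Complex.re_sum, Pi.star_apply, hxa]
      exact Finset.sum_congr rfl fun i _ => star_mul_self_re _
    have hNnonneg : ∀ a, 0 ≤ N a := by
      intro a; rw [hN]; positivity
    set S : ℝ := ∑ a, N a with hSdef
    have hS : ∑ v, ‖x v‖ ^ 2 = S := by
      rw [hSdef, Fintype.sum_prod_type]
      exact Finset.sum_congr rfl fun a _ => (hN a).symm
    have hz : star x ⬝ᵥ Q.mulVec x
        = ∑ a : Fin (t + 1), ∑ b : Fin (t + 1),
            (if a = b then (d : ℂ) * (star (xa a) ⬝ᵥ xa a)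
             else star (xa a) ⬝ᵥ (Uaux t m φ a b).mulVec (xa b)) := by
      have h1 : star x ⬝ᵥ Q.mulVec x = ∑ p, ∑ q, star (x p) * (Q p q * x q) := by
        simp [dotProduct, Matrix.mulVec, Finset.mul_sum]
      rw [h1, Fintype.sum_prod_type]
      refine Finset.sum_congr rfl fun a _ => ?_
      have h2 : ∀ i : Fin m, ∑ q : Fin (t + 1) × Fin m, star (x (a, i)) * (Q (a, i) q * x q)
          = ∑ b : Fin (t + 1), ∑ j : Fin m, star (x (a, i)) * (Q (a, i) (b, j) * x (b, j)) :=
        fun i => Fintype.sum_prod_type _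
      rw [Finset.sum_congr rfl fun i _ => h2 i, Finset.sum_comm]
      refine Finset.sum_congr rfl fun b _ => ?_
      by_cases hab : a = b
      · subst hab
        rw [if_pos rfl]
        have hQa : ∀ i j : Fin m, Q (a, i) (a, j) = ((d : ℂ) * if i = j then 1 else 0) :=
          fun i j => by rw [hQ, if_pos rfl]
        simp only [hQa, dotProduct, Pi.star_apply, Finset.mul_sum, mul_ite, mul_one,
          mul_zero, ite_mul, zero_mul, Finset.sum_ite_eq, Finset.mem_univ, if_true, hxa]
        exact Finset.sum_congr rfl fun i _ => by ring
      · rw [if_neg hab]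
        have hQa : ∀ i j : Fin m, Q (a, i) (b, j) = Uaux t m φ a b i j :=
          fun i j => by rw [hQ, if_neg hab]
        simp only [hQa, dotProduct, Pi.star_apply, Matrix.mulVec, Finset.mul_sum, hxa]
    -- lower bound each term
    have hterm : ∀ a b : Fin (t + 1),
        (if a = b then d * N a else -((N a + N b) / 2))
          ≤ (if a = b then (d : ℂ) * (star (xa a) ⬝ᵥ xa a)
             else star (xa a) ⬝ᵥ (Uaux t m φ a b).mulVec (xa b)).re := by
      intro a b
      by_cases hab : a = b
      · rw [if_pos hab, if_pos hab, Complex.re_ofReal_mul]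
      · rw [if_neg hab, if_neg hab]
        have := key_unitary_bound (Uaux t m φ a b) (Uaux_unitary φ hunit a b) (xa a) (xa b)
        simpa [neg_div] using this
    have hre : (star x ⬝ᵥ Q.mulVec x).re
        = ∑ a : Fin (t + 1), ∑ b : Fin (t + 1),
            (if a = b then (d : ℂ) * (star (xa a) ⬝ᵥ xa a)
             else star (xa a) ⬝ᵥ (Uaux t m φ a b).mulVec (xa b)).re := by
      rw [hz, Complex.re_sum]
      exact Finset.sum_congr rfl fun a _ => Complex.re_sum _ _
    have hGb : ∀ a : Fin (t + 1),
        ∑ b : Fin (t + 1), (if a = b then d * N a else -((N a + N b) / 2))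
          = d * N a + N a - (((t : ℝ) + 1) * N a + S) / 2 := by
      intro a
      have heach : ∀ b : Fin (t + 1), (if a = b then d * N a else -((N a + N b) / 2))
          = (if a = b then d * N a + (N a + N b) / 2 else 0) - (N a + N b) / 2 := by
        intro b; by_cases h : a = b
        · subst h; simp
        · simp [h]
      rw [Finset.sum_congr rfl fun b _ => heach b, Finset.sum_sub_distrib,
        Finset.sum_ite_eq, if_pos (Finset.mem_univ a)]
      have hc : ∑ b : Fin (t + 1), (N a + N b) / 2 = (((t : ℝ) + 1) * N a + S) / 2 := by
        rw [← Finset.sum_div, Finset.sum_add_distrib, Finset.sum_const, Finset.card_univ,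
          Fintype.card_fin, nsmul_eq_mul, ← hSdef]
        push_cast
        ring
      rw [hc]
      ring
    have hGtot : ∑ a : Fin (t + 1), ∑ b : Fin (t + 1),
        (if a = b then d * N a else -((N a + N b) / 2)) = (d - t) * S := by
      rw [Finset.sum_congr rfl fun a _ => hGb a]
      have : ∑ a : Fin (t + 1), (d * N a + N a - (((t : ℝ) + 1) * N a + S) / 2)
          = d * S + S - (((t : ℝ) + 1) * S + ((t : ℝ) + 1) * S) / 2 := by
        rw [Finset.sum_sub_distrib, Finset.sum_add_distrib, ← Finset.mul_sum, ← hSdef,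
          ← Finset.sum_div, Finset.sum_add_distrib, ← Finset.mul_sum, ← hSdef,
          Finset.sum_const, Finset.card_univ, Fintype.card_fin, nsmul_eq_mul]
        push_cast
        ring
      rw [this]
      ring
    rw [hS, hre, ← hGtot]
    exact Finset.sum_le_sum fun a _ => Finset.sum_le_sum fun b _ => hterm a b
  refine ⟨hineq, fun hdt => ?_⟩
  have hQH : Q.IsHermitian := by
    ext p q
    obtain ⟨a, i⟩ := p
    obtain ⟨b, j⟩ := q
    rw [Matrix.conjTranspose_apply, hQ, hQ]
    by_cases hab : a = b
    · subst hab
      by_cases hij : i = j <;>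
        simp [hij, eq_comm, Complex.star_def, Complex.conj_ofReal]
    · rw [if_neg (fun h => hab h.symm), if_neg hab, ← Matrix.conjTranspose_apply,
        Uaux_symm φ hherm]
  have hpos : ∀ x : Fin (t + 1) × Fin m → ℂ, x ≠ 0 → 0 < star x ⬝ᵥ Q.mulVec x := by
    intro x hx
    have him : (star x ⬝ᵥ Q.mulVec x).im = 0 := by
      have hself : star (star x ⬝ᵥ Q.mulVec x) = star x ⬝ᵥ Q.mulVec x := by
        rw [← Matrix.star_dotProduct, star_mulVec, hQH.eq, ← dotProduct_mulVec]
      rw [← Complex.conj_eq_iff_im, ← Complex.star_def, hself]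
    have hSpos : 0 < ∑ v, ‖x v‖ ^ 2 := by
      obtain ⟨v, hv⟩ := Function.ne_iff.mp hx
      have hv' : x v ≠ 0 := by simpa using hv
      exact Finset.sum_pos' (fun w _ => by positivity)
        ⟨v, Finset.mem_univ v, pow_pos (norm_pos_iff.mpr hv') 2⟩
    have hre : 0 < (star x ⬝ᵥ Q.mulVec x).re :=
      lt_of_lt_of_le (by nlinarith [hineq x]) (le_refl _) |>.trans_le (le_refl _)
    rw [Complex.lt_def]
    exact ⟨by simpa using hre, by simp [him]⟩
  have hpd : Q.PosDef := Matrix.PosDef.of_dotProduct_mulVec_pos hQH hpos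
  exact ⟨hpd, hpd.isUnit⟩
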